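/- Let E be a trace-preserving completely positive map on a finite-dimensional Hilbert space. If ρ and σ are fixed point states of E (i.e., nonzero positive operators with E(ρ)=ρ, E(σ)=σ) and supp(σ) is a proper subspace of supp(ρ), then there exists a fixed point state η with supp(η) ⊥ supp(σ) and supp(ρ) = supp(η) ⊕ supp(σ). -/

import Mathlib

open Matrix Filter Topology
open scoped ComplexOrder

/-- The matrix of the orthogonal projection onto a subspace `X`. -/
noncomputable def projMat {d : ℕ} (X : Submodule ℂ (EuclideanSpace ℂ (Fin d))) :
    Matrix (Fin d) (Fin d) ℂ :=
  Matrix.toEuclideanLin.symm ((X.subtypeL.comp X.orthogonalProjection).toLinearMap)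

/-- The support of an operator: the range of the associated linear map. -/
noncomputable def matSupp {d : ℕ} (A : Matrix (Fin d) (Fin d) ℂ) :
    Submodule ℂ (EuclideanSpace ℂ (Fin d)) :=
  LinearMap.range (Matrix.toEuclideanLin A)

/-- The outer product `|v⟩⟨v|`. -/
noncomputable def outer {d : ℕ} (v : EuclideanSpace ℂ (Fin d)) : Matrix (Fin d) (Fin d) ℂ :=
  fun i j => v i * star (v j)

/-- The completely positive map `A ↦ ∑ i, E i * A * (E i)†` given by Kraus operators `E`. -/
noncomputable def krausMap {d m : ℕ} (E : Fin m → Matrix (Fin d) (Fin d) ℂ)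
    (A : Matrix (Fin d) (Fin d) ℂ) : Matrix (Fin d) (Fin d) ℂ :=
  ∑ i, E i * A * (E i)ᴴ

section Aux

variable {d m : ℕ}

private lemma tel_apply (A : Matrix (Fin d) (Fin d) ℂ) (x : EuclideanSpace ℂ (Fin d)) :
    Matrix.toEuclideanLin A x = WithLp.toLp 2 (A *ᵥ x.ofLp) := rfl

private lemma inner_eq (x y : EuclideanSpace ℂ (Fin d)) :
    (inner ℂ x y : ℂ) = star (x : Fin d → ℂ) ⬝ᵥ (y : Fin d → ℂ) := by
  rw [EuclideanSpace.inner_eq_star_dotProduct, dotProduct_comm]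

private lemma ext_mulVec {A B : Matrix (Fin d) (Fin d) ℂ}
    (h : ∀ x : Fin d → ℂ, A *ᵥ x = B *ᵥ x) : A = B :=
  Matrix.toEuclideanLin.injective (LinearMap.ext fun x => congrArg (WithLp.toLp 2) (h x.ofLp))

private lemma mem_matSupp_iff {A : Matrix (Fin d) (Fin d) ℂ} {x : EuclideanSpace ℂ (Fin d)} :
    x ∈ matSupp A ↔ ∃ y : Fin d → ℂ, A *ᵥ y = x :=
  ⟨fun ⟨y, hy⟩ => ⟨y.ofLp, congrArg WithLp.ofLp hy⟩,
    fun ⟨y, hy⟩ => ⟨WithLp.toLp 2 y, congrArg (WithLp.toLp 2) hy⟩⟩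

private lemma mulVec_mem_matSupp (A : Matrix (Fin d) (Fin d) ℂ) (y : Fin d → ℂ) :
    (WithLp.toLp 2 (A *ᵥ y)) ∈ matSupp A := ⟨WithLp.toLp 2 y, rfl⟩

private lemma mem_orth_matSupp_iff {A : Matrix (Fin d) (Fin d) ℂ} {x : EuclideanSpace ℂ (Fin d)} :
    x ∈ (matSupp A)ᗮ ↔ Aᴴ *ᵥ (x : Fin d → ℂ) = 0 := by
  constructor
  · intro h
    funext j
    have h2 := (Submodule.mem_orthogonal _ _).1 h
        (WithLp.toLp 2 (A *ᵥ Pi.single j 1 : Fin d → ℂ)) ⟨WithLp.toLp 2 (Pi.single j 1), rfl⟩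
    rw [inner_eq, WithLp.ofLp_toLp, star_mulVec, ← Matrix.dotProduct_mulVec] at h2
    simpa [dotProduct, Pi.single_apply, Finset.sum_ite_eq', star_eq_iff_star_eq] using h2
  · intro h
    rw [Submodule.mem_orthogonal]
    rintro u ⟨y, rfl⟩
    rw [inner_eq]
    show star ((A *ᵥ y.ofLp : Fin d → ℂ)) ⬝ᵥ (x : Fin d → ℂ) = 0
    rw [star_mulVec, ← Matrix.dotProduct_mulVec, h, dotProduct_zero]

private lemma mem_orth_matSupp_psd {A : Matrix (Fin d) (Fin d) ℂ} (hA : A.PosSemidef)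
    {x : EuclideanSpace ℂ (Fin d)} :
    x ∈ (matSupp A)ᗮ ↔ A *ᵥ (x : Fin d → ℂ) = 0 := by
  rw [mem_orth_matSupp_iff, hA.1]

private lemma matSupp_le_of_ker {A B : Matrix (Fin d) (Fin d) ℂ}
    (hA : A.IsHermitian) (hB : B.IsHermitian)
    (h : ∀ x : Fin d → ℂ, B *ᵥ x = 0 → A *ᵥ x = 0) : matSupp A ≤ matSupp B := by
  rw [← Submodule.orthogonal_orthogonal (matSupp A),
    ← Submodule.orthogonal_orthogonal (matSupp B)]
  apply Submodule.orthogonal_le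
  intro x hx
  rw [mem_orth_matSupp_iff, hB] at hx
  rw [mem_orth_matSupp_iff, hA]
  exact h _ hx

private lemma matSupp_mul_le (A B : Matrix (Fin d) (Fin d) ℂ) :
    matSupp (A * B) ≤ matSupp A := by
  rintro x ⟨y, rfl⟩
  exact ⟨WithLp.toLp 2 (B *ᵥ y.ofLp), by rw [tel_apply, tel_apply, ← Matrix.mulVec_mulVec]⟩

private lemma matSupp_mul_conjTranspose_self (M : Matrix (Fin d) (Fin d) ℂ) :
    matSupp (M * Mᴴ) = matSupp M := by
  have psd : (M * Mᴴ).PosSemidef := Matrix.posSemidef_self_mul_conjTranspose M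
  rw [← Submodule.orthogonal_orthogonal (matSupp (M * Mᴴ)),
    ← Submodule.orthogonal_orthogonal (matSupp M)]
  congr 1
  ext x
  rw [mem_orth_matSupp_psd psd, mem_orth_matSupp_iff]
  constructor
  · intro h
    have h2 : star (x : Fin d → ℂ) ⬝ᵥ (M * Mᴴ) *ᵥ (x : Fin d → ℂ) = 0 := by
      rw [h, dotProduct_zero]
    rw [← Matrix.mulVec_mulVec, Matrix.dotProduct_mulVec] at h2
    have h3 : star (Mᴴ *ᵥ (x : Fin d → ℂ)) ⬝ᵥ (Mᴴ *ᵥ (x : Fin d → ℂ)) = 0 := by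
      rw [star_mulVec, Matrix.conjTranspose_conjTranspose]; exact h2
    exact dotProduct_star_self_eq_zero.1 h3
  · intro h
    rw [← Matrix.mulVec_mulVec, h, Matrix.mulVec_zero]

private lemma sum_mulVec' {ι : Type*} (s : Finset ι) (A : ι → Matrix (Fin d) (Fin d) ℂ)
    (x : Fin d → ℂ) : (∑ i ∈ s, A i) *ᵥ x = ∑ i ∈ s, A i *ᵥ x := by
  ext j
  simp only [Matrix.mulVec, dotProduct, Finset.sum_apply, Matrix.sum_apply,
    Finset.sum_mul]
  rw [Finset.sum_comm]

private lemma dotProduct_sum' {ι : Type*} (s : Finset ι) (u : Fin d → ℂ)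
    (v : ι → (Fin d → ℂ)) : u ⬝ᵥ (∑ i ∈ s, v i) = ∑ i ∈ s, u ⬝ᵥ v i := by
  simp only [dotProduct, Finset.sum_apply, Finset.mul_sum]
  rw [Finset.sum_comm]

private lemma mulVec_add' (A : Matrix (Fin d) (Fin d) ℂ) (x y : EuclideanSpace ℂ (Fin d)) :
    A *ᵥ ((x + y : EuclideanSpace ℂ (Fin d)) : Fin d → ℂ) =
      A *ᵥ (x : Fin d → ℂ) + A *ᵥ (y : Fin d → ℂ) :=
  by rw [WithLp.ofLp_add, Matrix.mulVec_add]

private lemma psd_sum {ι : Type*} (s : Finset ι) (A : ι → Matrix (Fin d) (Fin d) ℂ)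
    (h : ∀ i ∈ s, (A i).PosSemidef) : (∑ i ∈ s, A i).PosSemidef := by
  rw [Matrix.posSemidef_iff_dotProduct_mulVec]
  constructor
  · show (∑ i ∈ s, A i)ᴴ = _
    rw [Matrix.conjTranspose_sum]
    exact Finset.sum_congr rfl fun i hi => (h i hi).1
  · intro x
    rw [sum_mulVec', dotProduct_sum' _ _ _]
    exact Finset.sum_nonneg fun i hi => (h i hi).dotProduct_mulVec_nonneg x

private lemma trace_mul_conjTranspose_self_zero {M : Matrix (Fin d) (Fin d) ℂ}
    (h : (M * Mᴴ).trace = 0) : M = 0 := by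
  have key : ∑ i, ∑ j, Complex.normSq (M i j) = 0 := by
    have : (M * Mᴴ).trace = ((∑ i, ∑ j, Complex.normSq (M i j) : ℝ) : ℂ) := by
      rw [Matrix.trace]
      push_cast
      refine Finset.sum_congr rfl fun i _ => ?_
      rw [Matrix.diag_apply, Matrix.mul_apply]
      refine Finset.sum_congr rfl fun j _ => ?_
      rw [Matrix.conjTranspose_apply, Complex.star_def, Complex.mul_conj]
    rw [this] at h
    exact_mod_cast h
  ext i j
  have h1 : ∀ i ∈ Finset.univ, (0:ℝ) ≤ ∑ j, Complex.normSq (M i j) :=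
    fun i _ => Finset.sum_nonneg fun j _ => Complex.normSq_nonneg _
  have h2 := (Finset.sum_eq_zero_iff_of_nonneg h1).1 key i (Finset.mem_univ i)
  have h3 := (Finset.sum_eq_zero_iff_of_nonneg
    (fun j _ => Complex.normSq_nonneg (M i j))).1 h2 j (Finset.mem_univ j)
  simpa using Complex.normSq_eq_zero.1 h3

open scoped MatrixOrder Matrix.Norms.L2Operator in
private lemma psd_sqrt_exists {A : Matrix (Fin d) (Fin d) ℂ} (hA : A.PosSemidef) :
    ∃ S : Matrix (Fin d) (Fin d) ℂ, Sᴴ = S ∧ S * S = A :=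
  ⟨CFC.sqrt A, (CFC.sqrt_nonneg A).posSemidef.1, CFC.sqrt_mul_sqrt_self A hA.nonneg⟩

private lemma psd_mul_psd_trace_zero {A B : Matrix (Fin d) (Fin d) ℂ}
    (hA : A.PosSemidef) (hB : B.PosSemidef) (h : (A * B).trace = 0) : A * B = 0 := by
  classical
  obtain ⟨a, haH, haa⟩ := psd_sqrt_exists hA
  obtain ⟨b, hbH, hbb⟩ := psd_sqrt_exists hB
  have hM : (a * b) * (a * b)ᴴ = a * B * a := by
    rw [Matrix.conjTranspose_mul, hbH, haH, ← hbb]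
    noncomm_ring
  have htr : ((a * b) * (a * b)ᴴ).trace = 0 := by
    rw [hM, ← Matrix.trace_mul_comm, ← Matrix.mul_assoc, haa, h]
  have hab : a * b = 0 := trace_mul_conjTranspose_self_zero htr
  calc A * B = a * ((a * b) * b) := by rw [← haa, ← hbb]; noncomm_ring
    _ = 0 := by rw [hab]; noncomm_ring

/-- Each Kraus term of a fixed point has support inside the support of the fixed point. -/
private lemma kraus_term_supp_le {E : Fin m → Matrix (Fin d) (Fin d) ℂ}
    {A : Matrix (Fin d) (Fin d) ℂ} (hA : A.PosSemidef) (hfix : krausMap E A = A) (i : Fin m) :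
    matSupp (E i * A * (E i)ᴴ) ≤ matSupp A := by
  have hterm : ∀ j, (E j * A * (E j)ᴴ).PosSemidef := fun j =>
    hA.mul_mul_conjTranspose_same (E j)
  apply matSupp_le_of_ker (hterm i).1 hA.1
  intro x hx
  have hsum : star x ⬝ᵥ (∑ j, E j * A * (E j)ᴴ) *ᵥ x = 0 := by
    rw [show (∑ j, E j * A * (E j)ᴴ) = A from hfix, hx, dotProduct_zero]
  rw [sum_mulVec', dotProduct_sum' _ _ _] at hsum
  have hz := (Finset.sum_eq_zero_iff_of_nonneg
    (fun j _ => (hterm j).dotProduct_mulVec_nonneg x)).1 hsum i (Finset.mem_univ i)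
  exact ((hterm i).dotProduct_mulVec_zero_iff x).1 hz

/-- The support of a fixed point is invariant under each Kraus operator. -/
private lemma kraus_invariant {E : Fin m → Matrix (Fin d) (Fin d) ℂ}
    {A : Matrix (Fin d) (Fin d) ℂ} (hA : A.PosSemidef) (hfix : krausMap E A = A) (i : Fin m)
    {x : EuclideanSpace ℂ (Fin d)} (hx : x ∈ matSupp A) :
    (WithLp.toLp 2 (E i *ᵥ (x : Fin d → ℂ))) ∈ matSupp A := by
  classical
  obtain ⟨S, hSH, hSS⟩ := psd_sqrt_exists hA
  obtain ⟨y, rfl⟩ := hx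
  have key : matSupp (E i * A) ≤ matSupp A := by
    have h1 : matSupp (E i * A) ≤ matSupp (E i * S) := by
      have : E i * A = (E i * S) * S := by
        rw [Matrix.mul_assoc, hSS]
      rw [this]; exact matSupp_mul_le _ _
    have h2 : matSupp (E i * S) = matSupp (E i * A * (E i)ᴴ) := by
      rw [← matSupp_mul_conjTranspose_self (E i * S)]
      congr 1
      rw [Matrix.conjTranspose_mul, hSH]
      calc E i * S * (S * (E i)ᴴ)
          = E i * (S * S) * (E i)ᴴ := by noncomm_ring
        _ = E i * A * (E i)ᴴ := by rw [hSS]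
    exact h1.trans (h2 ▸ kraus_term_supp_le hA hfix i)
  refine key ⟨y, ?_⟩
  rw [tel_apply, ← Matrix.mulVec_mulVec]
  rfl

private lemma projMat_mulVec (X : Submodule ℂ (EuclideanSpace ℂ (Fin d)))
    (x : EuclideanSpace ℂ (Fin d)) :
    (WithLp.toLp 2 (projMat X *ᵥ (x : Fin d → ℂ))) =
      X.starProjection x := by
  have : Matrix.toEuclideanLin (projMat X) x =
      ((X.subtypeL.comp X.orthogonalProjection).toLinearMap) x := by
    rw [projMat, LinearEquiv.apply_symm_apply]
  exact this

private lemma projMat_mulVec_of_mem {X : Submodule ℂ (EuclideanSpace ℂ (Fin d))}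
    {x : EuclideanSpace ℂ (Fin d)} (hx : x ∈ X) :
    projMat X *ᵥ (x : Fin d → ℂ) = x := by
  have h := congrArg WithLp.ofLp (projMat_mulVec X x)
  rw [Submodule.starProjection_eq_self_iff.2 hx] at h
  exact h

private lemma projMat_mulVec_of_orth {X : Submodule ℂ (EuclideanSpace ℂ (Fin d))}
    {x : EuclideanSpace ℂ (Fin d)} (hx : x ∈ Xᗮ) :
    projMat X *ᵥ (x : Fin d → ℂ) = 0 := by
  have h := congrArg WithLp.ofLp (projMat_mulVec X x)
  rw [Submodule.starProjection_apply, Submodule.orthogonalProjectionOnto_eq_zero_iff.2 hx] at h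
  exact h

private lemma projMat_mulVec_mem (X : Submodule ℂ (EuclideanSpace ℂ (Fin d)))
    (x : EuclideanSpace ℂ (Fin d)) :
    (WithLp.toLp 2 (projMat X *ᵥ (x : Fin d → ℂ))) ∈ X := by
  rw [projMat_mulVec X x]; exact X.starProjection_apply_mem x

private lemma projMat_isHermitian (X : Submodule ℂ (EuclideanSpace ℂ (Fin d))) :
    (projMat X).IsHermitian := by
  rw [Matrix.isHermitian_iff_isSymmetric]
  intro x y
  have hx := projMat_mulVec X x
  have hy := projMat_mulVec X y
  rw [show Matrix.toEuclideanLin (projMat X) x = X.starProjection x from hx,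
    show Matrix.toEuclideanLin (projMat X) y = X.starProjection y from hy]
  exact Submodule.inner_starProjection_left_eq_right X x y

private lemma projMat_idem (X : Submodule ℂ (EuclideanSpace ℂ (Fin d))) :
    projMat X * projMat X = projMat X := by
  apply ext_mulVec
  intro x
  rw [← Matrix.mulVec_mulVec]
  exact projMat_mulVec_of_mem (projMat_mulVec_mem X (WithLp.toLp 2 x))

private lemma projMat_posSemidef (X : Submodule ℂ (EuclideanSpace ℂ (Fin d))) :
    (projMat X).PosSemidef := by
  have : projMat X = (projMat X)ᴴ * projMat X := by
    rw [(projMat_isHermitian X).eq, projMat_idem]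
  rw [this]
  exact Matrix.posSemidef_conjTranspose_mul_self _

private lemma matSupp_projMat (X : Submodule ℂ (EuclideanSpace ℂ (Fin d))) :
    matSupp (projMat X) = X := by
  apply le_antisymm
  · rintro x ⟨y, rfl⟩
    exact projMat_mulVec_mem X y
  · intro x hx
    exact ⟨x, congrArg (WithLp.toLp 2) (projMat_mulVec_of_mem hx)⟩

private lemma projMat_mulVec_eq_zero_iff {X : Submodule ℂ (EuclideanSpace ℂ (Fin d))}
    {x : EuclideanSpace ℂ (Fin d)} :
    projMat X *ᵥ (x : Fin d → ℂ) = 0 ↔ x ∈ Xᗮ := by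
  constructor
  · intro h
    rw [← Submodule.orthogonalProjectionOnto_eq_zero_iff (K := X)]
    have h2 := projMat_mulVec X x
    have h3 : X.starProjection x = 0 := by rw [← h2, h]; rfl
    exact Subtype.ext h3
  · exact projMat_mulVec_of_orth

private lemma conj_dot (B A : Matrix (Fin d) (Fin d) ℂ) (hB : Bᴴ = B) (x : Fin d → ℂ) :
    star x ⬝ᵥ (B * A * B) *ᵥ x = star (B *ᵥ x) ⬝ᵥ (A *ᵥ (B *ᵥ x)) := by
  rw [star_mulVec, hB, ← Matrix.dotProduct_mulVec, Matrix.mulVec_mulVec, Matrix.mulVec_mulVec]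

end Aux

/-- If `σ` and `ρ` are fixed point states with `supp σ` properly contained in `supp ρ`,
there is a fixed point state `η` with `supp η ⊥ supp σ` and `supp ρ = supp η ⊕ supp σ`. -/
theorem stmt4 {d m : ℕ} (E : Fin m → Matrix (Fin d) (Fin d) ℂ)
    (hE : ∑ i, (E i)ᴴ * E i = 1)
    (ρ σ : Matrix (Fin d) (Fin d) ℂ)
    (hρ : ρ.PosSemidef) (hρ0 : ρ ≠ 0) (hρfix : krausMap E ρ = ρ)
    (hσ : σ.PosSemidef) (hσ0 : σ ≠ 0) (hσfix : krausMap E σ = σ)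
    (hlt : matSupp σ < matSupp ρ) :
    ∃ η : Matrix (Fin d) (Fin d) ℂ, η.PosSemidef ∧ η ≠ 0 ∧ krausMap E η = η ∧
      (∀ x ∈ matSupp η, ∀ y ∈ matSupp σ, inner ℂ x y = (0 : ℂ)) ∧
      matSupp ρ = matSupp η ⊔ matSupp σ := by
  classical
  have hle : matSupp σ ≤ matSupp ρ := hlt.le
  set T : Submodule ℂ (EuclideanSpace ℂ (Fin d)) := (matSupp σ)ᗮ ⊓ matSupp ρ with hTdef
  have hsup : matSupp σ ⊔ T = matSupp ρ := Submodule.sup_orthogonal_inf_of_hasOrthogonalProjection hle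
  set P : Matrix (Fin d) (Fin d) ℂ := projMat (matSupp σ) with hPdef
  set Q : Matrix (Fin d) (Fin d) ℂ := projMat T with hQdef
  have hPH : Pᴴ = P := (projMat_isHermitian _).eq
  have hQH : Qᴴ = Q := (projMat_isHermitian _).eq
  have hPP : P * P = P := projMat_idem _
  have hQQ : Q * Q = Q := projMat_idem _
  have hPσ : P * σ = σ := by
    apply ext_mulVec
    intro x
    rw [← Matrix.mulVec_mulVec]
    exact projMat_mulVec_of_mem (mulVec_mem_matSupp σ x)
  set F : Matrix (Fin d) (Fin d) ℂ := ∑ i, (E i)ᴴ * P * E i with hFdef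
  have hFH : Fᴴ = F := by
    rw [hFdef, Matrix.conjTranspose_sum]
    refine Finset.sum_congr rfl fun i _ => ?_
    rw [Matrix.conjTranspose_mul, Matrix.conjTranspose_mul, Matrix.conjTranspose_conjTranspose,
      hPH, Matrix.mul_assoc]
  have hFpsd : F.PosSemidef := by
    rw [hFdef]
    apply psd_sum
    intro i _
    have : (E i)ᴴ * P * E i = (P * E i)ᴴ * (P * E i) := by
      rw [Matrix.conjTranspose_mul, hPH]
      calc (E i)ᴴ * P * E i = (E i)ᴴ * (P * P) * E i := by rw [hPP]
        _ = (E i)ᴴ * P * (P * E i) := by noncomm_ring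
    rw [this]
    exact Matrix.posSemidef_conjTranspose_mul_self _
  -- trace identity for fixed points
  have key : ∀ A : Matrix (Fin d) (Fin d) ℂ, krausMap E A = A → (F * A).trace = (P * A).trace := by
    intro A hfix
    calc (F * A).trace = ∑ i, ((E i)ᴴ * (P * (E i * A))).trace := by
          rw [hFdef, Finset.sum_mul, Matrix.trace_sum]
          exact Finset.sum_congr rfl fun i _ => by rw [Matrix.mul_assoc, Matrix.mul_assoc]
      _ = ∑ i, (P * (E i * A * (E i)ᴴ)).trace := by
          refine Finset.sum_congr rfl fun i _ => ?_
          rw [Matrix.trace_mul_comm]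
          congr 1
          noncomm_ring
      _ = (P * krausMap E A).trace := by rw [krausMap, Finset.mul_sum, Matrix.trace_sum]
      _ = (P * A).trace := by rw [hfix]
  -- G = 1 - F is PSD
  have hCH : ((1 : Matrix (Fin d) (Fin d) ℂ) - P)ᴴ = 1 - P := by
    rw [Matrix.conjTranspose_sub, Matrix.conjTranspose_one, hPH]
  have hCC : ((1 : Matrix (Fin d) (Fin d) ℂ) - P) * (1 - P) = 1 - P := by
    have : ((1 : Matrix (Fin d) (Fin d) ℂ) - P) * (1 - P) = 1 - P - P + P * P := by noncomm_ring
    rw [this, hPP]; abel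
  have hGpsd : ((1 : Matrix (Fin d) (Fin d) ℂ) - F).PosSemidef := by
    have hG : (1 : Matrix (Fin d) (Fin d) ℂ) - F = ∑ i, ((1 - P) * E i)ᴴ * ((1 - P) * E i) := by
      conv_lhs => rw [← hE, hFdef]
      rw [← Finset.sum_sub_distrib]
      refine Finset.sum_congr rfl fun i _ => ?_
      calc (E i)ᴴ * E i - (E i)ᴴ * P * E i = (E i)ᴴ * ((1 - P) * E i) := by noncomm_ring
        _ = (E i)ᴴ * (((1 - P) * (1 - P)) * E i) := by rw [hCC]
        _ = ((1 - P) * E i)ᴴ * ((1 - P) * E i) := by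
            rw [Matrix.conjTranspose_mul, hCH]; noncomm_ring
    rw [hG]
    exact psd_sum _ _ fun i _ => Matrix.posSemidef_conjTranspose_mul_self _
  -- (1 - F) * σ = 0
  have hGσ : ((1 : Matrix (Fin d) (Fin d) ℂ) - F) * σ = 0 := by
    apply psd_mul_psd_trace_zero hGpsd hσ
    rw [Matrix.sub_mul, Matrix.one_mul, Matrix.trace_sub, key σ hσfix, hPσ, sub_self]
  -- (1 - F) * P = 0, P * (1 - F) = 0, F * P = P, P * F = P
  have hGP : ((1 : Matrix (Fin d) (Fin d) ℂ) - F) * P = 0 := by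
    apply ext_mulVec
    intro x
    rw [← Matrix.mulVec_mulVec, Matrix.zero_mulVec]
    obtain ⟨y, hy⟩ := mem_matSupp_iff.1 (projMat_mulVec_mem (matSupp σ) (WithLp.toLp 2 x))
    rw [← (show σ *ᵥ y = P *ᵥ x from hy), Matrix.mulVec_mulVec, hGσ, Matrix.zero_mulVec]
  have hFP : F * P = P := by
    have h := hGP
    rw [Matrix.sub_mul, Matrix.one_mul, sub_eq_zero] at h
    exact h.symm
  have hPF : P * F = P := by
    have h := congrArg Matrix.conjTranspose hFP
    rwa [Matrix.conjTranspose_mul, hFH, hPH] at h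
  -- H = F - P is PSD
  have hHpsd : (F - P).PosSemidef := by
    have hH : F - P = (1 - P) * F * (1 - P)ᴴ := by
      rw [hCH]
      have expand : ((1 : Matrix (Fin d) (Fin d) ℂ) - P) * F * (1 - P) =
          F - P * F - F * P + P * F * P := by noncomm_ring
      rw [expand, hPF, hFP, hPP]
      abel
    rw [hH]
    exact hFpsd.mul_mul_conjTranspose_same _
  have hHρ : (F - P) * ρ = 0 := by
    apply psd_mul_psd_trace_zero hHpsd hρ
    rw [Matrix.sub_mul, Matrix.trace_sub, key ρ hρfix, sub_self]
  -- F v = P v on supp ρ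
  have hFρv : ∀ v : EuclideanSpace ℂ (Fin d), v ∈ matSupp ρ →
      F *ᵥ (v : Fin d → ℂ) = P *ᵥ (v : Fin d → ℂ) := by
    rintro v ⟨y, rfl⟩
    have h : ((F - P) * ρ) *ᵥ y = 0 := by rw [hHρ, Matrix.zero_mulVec]
    rw [← Matrix.mulVec_mulVec, Matrix.sub_mulVec, sub_eq_zero] at h
    exact h
  -- supports are invariant under the Kraus operators
  have hC2 : ∀ (i : Fin m) (v : EuclideanSpace ℂ (Fin d)), v ∈ matSupp σ →
      (WithLp.toLp 2 (E i *ᵥ (v : Fin d → ℂ))) ∈ matSupp σ :=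
    fun i v hv => kraus_invariant hσ hσfix i hv
  have hC3 : ∀ (i : Fin m) (v : EuclideanSpace ℂ (Fin d)), v ∈ T →
      (WithLp.toLp 2 (E i *ᵥ (v : Fin d → ℂ))) ∈ T := by
    intro i v hv
    obtain ⟨hv1, hv2⟩ := Submodule.mem_inf.1 hv
    refine Submodule.mem_inf.2 ⟨?_, kraus_invariant hρ hρfix i hv2⟩
    -- show P (E i v) = 0
    have hPv : P *ᵥ (v : Fin d → ℂ) = 0 := projMat_mulVec_of_orth hv1
    have hFv : F *ᵥ (v : Fin d → ℂ) = 0 := by rw [hFρv v hv2, hPv]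
    have hdot : star (v : Fin d → ℂ) ⬝ᵥ F *ᵥ (v : Fin d → ℂ) = 0 := by
      rw [hFv, dotProduct_zero]
    rw [hFdef, sum_mulVec', dotProduct_sum' _ _ _] at hdot
    have hterm : ∀ j : Fin m, ((E j)ᴴ * P * E j).PosSemidef := by
      intro j
      have : (E j)ᴴ * P * E j = (P * E j)ᴴ * (P * E j) := by
        rw [Matrix.conjTranspose_mul, hPH]
        calc (E j)ᴴ * P * E j = (E j)ᴴ * (P * P) * E j := by rw [hPP]
          _ = (E j)ᴴ * P * (P * E j) := by noncomm_ring
      rw [this]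
      exact Matrix.posSemidef_conjTranspose_mul_self _
    have hz := (Finset.sum_eq_zero_iff_of_nonneg
      (fun j _ => (hterm j).dotProduct_mulVec_nonneg (v : Fin d → ℂ))).1 hdot i (Finset.mem_univ i)
    -- rewrite as quadratic form in E i v
    have hq : star (E i *ᵥ (v : Fin d → ℂ)) ⬝ᵥ P *ᵥ (E i *ᵥ (v : Fin d → ℂ)) = 0 := by
      rw [star_mulVec, ← Matrix.dotProduct_mulVec, Matrix.mulVec_mulVec, Matrix.mulVec_mulVec]
      exact hz
    have hPEiv := ((projMat_posSemidef (matSupp σ)).dotProduct_mulVec_zero_iff _).1 hq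
    exact (projMat_mulVec_eq_zero_iff (x := WithLp.toLp 2 (E i *ᵥ (v : Fin d → ℂ)))).1 hPEiv
  -- commutation of E i with Q on supp ρ
  have hSσT : matSupp σ ≤ Tᗮ :=
    (Submodule.le_orthogonal_orthogonal (matSupp σ)).trans
      (Submodule.orthogonal_le inf_le_left)
  have hcommv : ∀ (i : Fin m) (v : EuclideanSpace ℂ (Fin d)), v ∈ matSupp ρ →
      E i *ᵥ (Q *ᵥ (v : Fin d → ℂ)) = Q *ᵥ (E i *ᵥ (v : Fin d → ℂ)) := by
    intro i v hv
    obtain ⟨a, ha, b, hb, hab⟩ := Submodule.mem_sup.1 (hsup ▸ hv)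
    have hQa : Q *ᵥ (a : Fin d → ℂ) = 0 := projMat_mulVec_of_orth (hSσT ha)
    have hQb : Q *ᵥ (b : Fin d → ℂ) = b := projMat_mulVec_of_mem hb
    have hQEa : Q *ᵥ (E i *ᵥ (a : Fin d → ℂ)) = 0 := projMat_mulVec_of_orth (hSσT (hC2 i a ha))
    have hQEb : Q *ᵥ (E i *ᵥ (b : Fin d → ℂ)) = E i *ᵥ (b : Fin d → ℂ) :=
      projMat_mulVec_of_mem (hC3 i b hb)
    rw [← hab, mulVec_add' Q a b, hQa, hQb, zero_add, mulVec_add' (E i) a b,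
      Matrix.mulVec_add, hQEa, hQEb, zero_add]
  have hcomm : ∀ i : Fin m, E i * Q * ρ = Q * (E i * ρ) := by
    intro i
    apply ext_mulVec
    intro x
    rw [← Matrix.mulVec_mulVec, ← Matrix.mulVec_mulVec, ← Matrix.mulVec_mulVec,
      ← Matrix.mulVec_mulVec]
    exact hcommv i (WithLp.toLp 2 (ρ *ᵥ x)) (mulVec_mem_matSupp ρ x)
  have hcomm' : ∀ i : Fin m, ρ * Q * (E i)ᴴ = ρ * (E i)ᴴ * Q := by
    intro i
    have h := congrArg Matrix.conjTranspose (hcomm i)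
    simp only [Matrix.conjTranspose_mul, hQH, hρ.1.eq, Matrix.mul_assoc] at h
    rw [Matrix.mul_assoc, Matrix.mul_assoc]
    exact h
  set η : Matrix (Fin d) (Fin d) ℂ := Q * ρ * Q with hηdef
  have hηpsd : η.PosSemidef := by
    have h := hρ.mul_mul_conjTranspose_same Q
    rwa [hQH] at h
  have hηfix : krausMap E η = η := by
    rw [krausMap]
    have hterm : ∀ i : Fin m, E i * η * (E i)ᴴ = Q * (E i * ρ * (E i)ᴴ) * Q := by
      intro i
      calc E i * η * (E i)ᴴ = (E i * Q * ρ) * Q * (E i)ᴴ := by rw [hηdef]; noncomm_ring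
        _ = (Q * (E i * ρ)) * Q * (E i)ᴴ := by rw [hcomm i]
        _ = Q * E i * (ρ * Q * (E i)ᴴ) := by noncomm_ring
        _ = Q * E i * (ρ * (E i)ᴴ * Q) := by rw [hcomm' i]
        _ = Q * (E i * ρ * (E i)ᴴ) * Q := by noncomm_ring
    calc ∑ i, E i * η * (E i)ᴴ = ∑ i, Q * (E i * ρ * (E i)ᴴ) * Q :=
          Finset.sum_congr rfl fun i _ => hterm i
      _ = Q * (∑ i, E i * ρ * (E i)ᴴ) * Q := by rw [Finset.mul_sum, Finset.sum_mul]
      _ = η := by rw [show (∑ i, E i * ρ * (E i)ᴴ) = ρ from hρfix, hηdef]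
  have hTle : T ≤ matSupp ρ := by rw [hTdef]; exact inf_le_right
  have hsuppη : matSupp η = T := by
    apply le_antisymm
    · calc matSupp η ≤ matSupp (Q * ρ) := matSupp_mul_le _ _
        _ ≤ matSupp Q := matSupp_mul_le _ _
        _ = T := matSupp_projMat T
    · have horth : (matSupp η)ᗮ ≤ Tᗮ := by
        intro x hx
        have hx0 : η *ᵥ (x : Fin d → ℂ) = 0 := (mem_orth_matSupp_psd hηpsd).1 hx
        have hdot : star (x : Fin d → ℂ) ⬝ᵥ η *ᵥ (x : Fin d → ℂ) = 0 := by
          rw [hx0, dotProduct_zero]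
        rw [hηdef, conj_dot Q ρ hQH] at hdot
        have hρQx : ρ *ᵥ (Q *ᵥ (x : Fin d → ℂ)) = 0 :=
          (hρ.dotProduct_mulVec_zero_iff _).1 hdot
        have h1 : (WithLp.toLp 2 (Q *ᵥ (x : Fin d → ℂ))) ∈ (matSupp ρ)ᗮ :=
          (mem_orth_matSupp_psd hρ).2 hρQx
        have h2 : (WithLp.toLp 2 (Q *ᵥ (x : Fin d → ℂ))) ∈ matSupp ρ :=
          hTle (projMat_mulVec_mem T x)
        have h3 := Submodule.inner_right_of_mem_orthogonal h2 h1
        have h0 : Q *ᵥ (x : Fin d → ℂ) = 0 :=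
          congrArg WithLp.ofLp (inner_self_eq_zero.1 h3)
        exact projMat_mulVec_eq_zero_iff.1 h0
      have h := Submodule.orthogonal_le horth
      rwa [Submodule.orthogonal_orthogonal, Submodule.orthogonal_orthogonal] at h
  have hT0 : T ≠ ⊥ := by
    intro h
    exact hlt.ne (by rw [← hsup, h, sup_bot_eq])
  obtain ⟨v, hvT, hv0⟩ := Submodule.exists_mem_ne_zero_of_ne_bot hT0
  have hη0 : η ≠ 0 := by
    intro h
    have hQv : Q *ᵥ (v : Fin d → ℂ) = v := projMat_mulVec_of_mem hvT
    have hdot : star (v : Fin d → ℂ) ⬝ᵥ η *ᵥ (v : Fin d → ℂ) = 0 := by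
      rw [h, Matrix.zero_mulVec, dotProduct_zero]
    rw [hηdef, conj_dot Q ρ hQH, hQv] at hdot
    have hρv : ρ *ᵥ (v : Fin d → ℂ) = 0 := (hρ.dotProduct_mulVec_zero_iff _).1 hdot
    have h1 : v ∈ (matSupp ρ)ᗮ := (mem_orth_matSupp_psd hρ).2 hρv
    have h3 := Submodule.inner_right_of_mem_orthogonal (hTle hvT) h1
    exact hv0 (inner_self_eq_zero.1 h3)
  refine ⟨η, hηpsd, hη0, hηfix, ?_, ?_⟩
  · intro x hx y hy
    have hxT : x ∈ T := hsuppη ▸ hx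
    rw [hTdef] at hxT
    exact (Submodule.mem_orthogonal' _ _).1 (Submodule.mem_inf.1 hxT).1 y hy
  · rw [hsuppη, sup_comm, hsup]
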